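/- arXiv:1407.8222 — 2 statements merged into one kernel-verified Lean document; each statement's English description precedes it below -/
import Mathlib

section
/- Let α₁,…,α_r and β₁,…,β_r be integer-coefficient affine functions on ℤ^d × ℤ, and suppose that for every n ∈ ℕ, only finitely many v ∈ ℤ^d give a nonzero product ∏_{i=1}^r C(α_i(v,n), β_i(v,n)). Then there exists a constant c ∈ ℕ such that for all integers n ≥ 1 and all v ∈ ℤ^d, if the product ∏_{i=1}^r C(α_i(v,n), β_i(v,n)) is nonzero, then |v_j| ≤ c·n for all coordinates j = 1,…,d. -/
/-- Modified binomial coefficient: `C(a,b) = a!/((a-b)!·b!)` if `0 ≤ b ≤ a`,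
`C(-1,0) = 1`, and `0` otherwise. -/
def mbinom (a b : ℤ) : ℕ :=
  if 0 ≤ b ∧ b ≤ a then a.toNat.choose b.toNat
  else if a = -1 ∧ b = 0 then 1 else 0

/-- The general term of a binomial multisum, indexed by `v ∈ ℤ^d`. -/
def multisumTerm {r d : ℕ} (A B : Fin r → Fin d → ℤ) (a' a'' b' b'' : Fin r → ℤ)
    (n : ℕ) (v : Fin d → ℤ) : ℕ :=
  ∏ i, mbinom ((∑ j, A i j * v j) + a' i * (n : ℤ) + a'' i)
              ((∑ j, B i j * v j) + b' i * (n : ℤ) + b'' i)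

/-- `f : ℕ → ℕ` is a binomial multisum: for every `n` only finitely many `v ∈ ℤ^d`
contribute, and `f n` is the (finite) sum of the products of modified binomial
coefficients of integer-coefficient affine functions of `(v, n)`. -/
def IsBinomialMultisum (f : ℕ → ℕ) : Prop :=
  ∃ (r d : ℕ) (A B : Fin r → Fin d → ℤ) (a' a'' b' b'' : Fin r → ℤ),
    (∀ n : ℕ, (Function.support (multisumTerm A B a' a'' b' b'' n)).Finite) ∧
    ∀ n : ℕ, f n = ∑ᶠ v : Fin d → ℤ, multisumTerm A B a' a'' b' b'' n v

namespace BMS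

abbrev Row (d : ℕ) := (Fin d → ℤ) × ℤ × ℤ

def rVal {d : ℕ} (r : Row d) (n : ℤ) (v : Fin d → ℤ) : ℤ :=
  (∑ j, r.1 j * v j) + r.2.1 * n + r.2.2

def rHom {d : ℕ} (r : Row d) (w : Fin d → ℤ) : ℤ :=
  ∑ j, r.1 j * w j

section elim
variable {d : ℕ}

def al (r : Row (d+1)) : ℤ := r.1 (Fin.last d)

def projRow (r : Row (d+1)) : Row d := (Fin.init r.1, r.2)

def combine (k l : Row (d+1)) : Row d :=
  (fun j => (-(al l)) * k.1 j.castSucc + al k * l.1 j.castSucc,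
   (-(al l)) * k.2.1 + al k * l.2.1,
   (-(al l)) * k.2.2 + al k * l.2.2)

def elim (L : List (Row (d+1))) : List (Row d) :=
  L.filterMap (fun r => if al r = 0 then some (projRow r) else none) ++
  L.flatMap (fun k => if 0 < al k then
      L.filterMap (fun l => if al l < 0 then some (combine k l) else none) else [])

lemma mem_elim_proj {L : List (Row (d+1))} {r : Row (d+1)} (hr : r ∈ L) (h0 : al r = 0) :
    projRow r ∈ elim L := by
  apply List.mem_append_left
  exact List.mem_filterMap.2 ⟨r, hr, by simp [h0]⟩

lemma mem_elim_comb {L : List (Row (d+1))} {k l : Row (d+1)} (hk : k ∈ L) (hl : l ∈ L)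
    (hka : 0 < al k) (hla : al l < 0) : combine k l ∈ elim L := by
  apply List.mem_append_right
  apply List.mem_flatMap.2 ⟨k, hk, ?_⟩
  rw [if_pos hka]
  exact List.mem_filterMap.2 ⟨l, hl, by simp [hla]⟩

lemma sum_split (u : Fin (d+1) → ℤ) (v : Fin (d+1) → ℤ) :
    ∑ j, u j * v j = (∑ j : Fin d, u j.castSucc * v j.castSucc) + u (Fin.last d) * v (Fin.last d) :=
  Fin.sum_univ_castSucc _

lemma rVal_projRow (r : Row (d+1)) (n : ℤ) (v : Fin (d+1) → ℤ) :
    rVal (projRow r) n (Fin.init v) = rVal r n v - al r * v (Fin.last d) := by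
  simp only [rVal, projRow, Fin.init, al, sum_split r.1 v]
  ring

lemma sum_comb (a b : ℤ) (x y z : Fin d → ℤ) :
    ∑ j, (a * x j + b * y j) * z j = a * ∑ j, x j * z j + b * ∑ j, y j * z j := by
  simp [add_mul, Finset.sum_add_distrib, Finset.mul_sum, mul_assoc]

lemma rVal_combine (k l : Row (d+1)) (n : ℤ) (v : Fin (d+1) → ℤ) :
    rVal (combine k l) n (Fin.init v)
      = (-(al l)) * rVal k n v + al k * rVal l n v
        - ((-(al l)) * al k + al k * al l) * v (Fin.last d) := by
  have hs : (∑ j : Fin d, (combine k l).1 j * Fin.init v j)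
      = (-(al l)) * (∑ j : Fin d, k.1 j.castSucc * v j.castSucc)
        + al k * (∑ j : Fin d, l.1 j.castSucc * v j.castSucc) := by
    simpa only [combine, Fin.init] using
      sum_comb (-(al l)) (al k) (fun j => k.1 j.castSucc) (fun j => l.1 j.castSucc)
        (fun j => v j.castSucc)
  simp only [rVal]
  rw [hs]
  simp only [combine, sum_split k.1 v, sum_split l.1 v, al]
  ring

lemma rHom_combine (k l : Row (d+1)) (w : Fin d → ℤ) :
    rHom (combine k l) w = (-(al l)) * rHom (projRow k) w + al k * rHom (projRow l) w := by
  simpa only [rHom, combine, projRow, Fin.init] using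
    sum_comb (-(al l)) (al k) (fun j => k.1 j.castSucc) (fun j => l.1 j.castSucc) w

end elim

end BMS

namespace BMS

lemma rHom_snoc {d : ℕ} (r : Row (d+1)) (W : Fin d → ℤ) (t : ℤ) :
    rHom r (Fin.snoc W t) = rHom (projRow r) W + al r * t := by
  simp only [rHom, sum_split r.1 (Fin.snoc W t), Fin.snoc_castSucc, Fin.snoc_last, projRow,
    Fin.init, al]

lemma rVal_eq_proj {d : ℕ} (r : Row (d+1)) (n : ℤ) (v : Fin (d+1) → ℤ) :
    rVal r n v = rVal (projRow r) n (Fin.init v) + al r * v (Fin.last d) := by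
  rw [rVal_projRow]; ring

lemma elim_cases {d : ℕ} {L : List (Row (d+1))} {s : Row d} (hs : s ∈ elim L) :
    (∃ r ∈ L, al r = 0 ∧ s = projRow r) ∨
    (∃ k ∈ L, ∃ l ∈ L, 0 < al k ∧ al l < 0 ∧ s = combine k l) := by
  rcases List.mem_append.1 hs with h | h
  · left
    rcases List.mem_filterMap.1 h with ⟨r, hr, heq⟩
    by_cases h0 : al r = 0
    · rw [if_pos h0] at heq
      exact ⟨r, hr, h0, (Option.some_inj.1 heq).symm⟩
    · rw [if_neg h0] at heq; exact absurd heq (by simp)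
  · right
    rcases List.mem_flatMap.1 h with ⟨k, hk, hmem⟩
    by_cases hk0 : 0 < al k
    · rw [if_pos hk0] at hmem
      rcases List.mem_filterMap.1 hmem with ⟨l, hl, heq⟩
      by_cases hl0 : al l < 0
      · rw [if_pos hl0] at heq
        exact ⟨k, hk, l, hl, hk0, hl0, (Option.some_inj.1 heq).symm⟩
      · rw [if_neg hl0] at heq; exact absurd heq (by simp)
    · rw [if_neg hk0] at hmem; simp at hmem

theorem core : ∀ (d : ℕ) (L : List (Row d)),
    (∃ w : Fin d → ℤ, w ≠ 0 ∧ ∀ r ∈ L, 0 ≤ rHom r w) ∨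
    (∃ c : ℕ, ∀ n : ℤ, 1 ≤ n → ∀ v : Fin d → ℤ,
      (∀ r ∈ L, 0 ≤ rVal r n v) → ∀ j, |v j| ≤ (c : ℤ) * n) := by
  intro d
  induction d with
  | zero => exact fun L => Or.inr ⟨0, fun n hn v hv j => j.elim0⟩
  | succ d ih =>
    intro L
    by_cases hpos : ∃ k ∈ L, 0 < al k
    · by_cases hneg : ∃ l ∈ L, al l < 0
      · obtain ⟨k₀, hk₀L, hk₀⟩ := hpos
        obtain ⟨l₀, hl₀L, hl₀⟩ := hneg
        rcases ih (elim L) with ⟨w', hw'0, hw'⟩ | ⟨c', hc'⟩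
        · -- lift the recession direction from dimension d
          left
          set N : ℤ := (L.map (fun r => if al r = 0 then 1 else |al r|)).prod with hNdef
          have hN0 : 0 < N := by
            apply List.prod_pos
            intro x hx
            rcases List.mem_map.1 hx with ⟨r, hr, rfl⟩
            split_ifs with h
            · norm_num
            · exact abs_pos.2 h
          have hdvd : ∀ r ∈ L, al r ≠ 0 → al r ∣ N := by
            intro r hr h0
            have hmem : |al r| ∈ L.map (fun r => if al r = 0 then 1 else |al r|) :=
              List.mem_map.2 ⟨r, hr, by rw [if_neg h0]⟩
            exact (abs_dvd _ _).1 (List.dvd_prod hmem)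
          set W : Fin d → ℤ := fun j => N * w' j with hWdef
          have hipW : ∀ r : Row (d+1), rHom (projRow r) W = N * rHom (projRow r) w' := by
            intro r
            rw [rHom, rHom, Finset.mul_sum]
            exact Finset.sum_congr rfl fun j _ => by rw [hWdef]; ring
          set lst := (L.filter fun k => 0 < al k).map (fun k => (-(rHom (projRow k) W)) / al k)
            with hlst
          have hne : lst.toFinset.Nonempty := by
            refine ⟨(-(rHom (projRow k₀) W)) / al k₀, ?_⟩
            rw [List.mem_toFinset]
            exact List.mem_map.2 ⟨k₀, List.mem_filter.2 ⟨hk₀L, by simpa using hk₀⟩, rfl⟩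
          set t := lst.toFinset.max' hne with ht
          refine ⟨Fin.snoc W t, ?_, ?_⟩
          · obtain ⟨j, hj⟩ := Function.ne_iff.1 hw'0
            intro h
            have h2 := congrFun h j.castSucc
            rw [Fin.snoc_castSucc] at h2
            rw [hWdef] at h2
            simp only [Pi.zero_apply] at h2
            rcases mul_eq_zero.1 h2 with h3 | h3
            · exact absurd h3 hN0.ne'
            · exact hj h3
          · intro r hr
            rw [rHom_snoc]
            rcases lt_trichotomy (al r) 0 with hra | hra | hra
            · -- al r < 0 : use the row achieving the max
              have htmem := lst.toFinset.max'_mem hne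
              rw [List.mem_toFinset] at htmem
              rcases List.mem_map.1 htmem with ⟨k, hkf, hkt⟩
              have hkL := (List.mem_filter.1 hkf).1
              have hka : 0 < al k := by simpa using (List.mem_filter.1 hkf).2
              have hcomb := hw' _ (mem_elim_comb hkL hr hka hra)
              rw [rHom_combine] at hcomb
              have hdvdk : al k ∣ rHom (projRow k) W := by
                rw [hipW]; exact dvd_mul_of_dvd_left (hdvd k hkL hka.ne') _
              have hat : al k * t = -(rHom (projRow k) W) := by
                have heq : t = -rHom (projRow k) W / al k := hkt.symm
                rw [heq]
                exact Int.mul_ediv_cancel' (dvd_neg.2 hdvdk)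
              have h2 : 0 ≤ al k * (rHom (projRow r) W + al r * t) := by
                have hmul := mul_nonneg hN0.le hcomb
                nlinarith [hat, hipW r, hipW k]
              have h3 := le_of_mul_le_mul_left (by linarith : al k * 0 ≤ al k * (rHom (projRow r) W + al r * t)) hka
              simpa using h3
            · rw [hra, zero_mul, add_zero, hipW]
              exact mul_nonneg hN0.le (hw' _ (mem_elim_proj hr hra))
            · -- al r > 0
              have hdvdr : al r ∣ rHom (projRow r) W := by
                rw [hipW]; exact dvd_mul_of_dvd_left (hdvd r hr hra.ne') _
              have hle : (-(rHom (projRow r) W)) / al r ≤ t := by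
                apply lst.toFinset.le_max'
                rw [List.mem_toFinset]
                exact List.mem_map.2 ⟨r, List.mem_filter.2 ⟨hr, by simpa using hra⟩, rfl⟩
              have h2 : al r * ((-(rHom (projRow r) W)) / al r) ≤ al r * t :=
                mul_le_mul_of_nonneg_left hle hra.le
              rw [Int.mul_ediv_cancel' (dvd_neg.2 hdvdr)] at h2
              linarith
        · -- bounded case
          right
          set M : Row (d+1) → ℤ :=
            fun r => (∑ j : Fin d, |r.1 j.castSucc|) * (c' : ℤ) + |r.2.1| + |r.2.2| with hM
          have hMnn : ∀ r, 0 ≤ M r := by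
            intro r; simp only [hM]
            have h1 : (0:ℤ) ≤ ∑ j : Fin d, |r.1 j.castSucc| :=
              Finset.sum_nonneg fun j _ => abs_nonneg _
            positivity
          refine ⟨c' + ((M k₀).toNat + (M l₀).toNat), ?_⟩
          intro n hn v hv
          have hn0 : (0:ℤ) ≤ n := by linarith
          have hv' : ∀ s ∈ elim L, 0 ≤ rVal s n (Fin.init v) := by
            intro s hs
            rcases elim_cases hs with ⟨r, hr, h0, rfl⟩ | ⟨k, hk, l, hl, hka, hla, rfl⟩
            · rw [rVal_projRow, h0]
              simpa using hv r hr
            · rw [rVal_combine]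
              have h1 := hv k hk
              have h2 := hv l hl
              have h3 : (-(al l)) * al k + al k * al l = 0 := by ring
              rw [h3, zero_mul, sub_zero]
              exact add_nonneg (mul_nonneg (by linarith) h1) (mul_nonneg hka.le h2)
          have hinit := hc' n hn (Fin.init v) hv'
          have habs : ∀ r ∈ L, |rVal (projRow r) n (Fin.init v)| ≤ M r * n := by
            intro r hr
            have h1 : |∑ j : Fin d, Fin.init r.1 j * Fin.init v j|
                ≤ (∑ j : Fin d, |r.1 j.castSucc|) * ((c':ℤ) * n) := by
              calc |∑ j : Fin d, Fin.init r.1 j * Fin.init v j|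
                  ≤ ∑ j : Fin d, |Fin.init r.1 j * Fin.init v j| :=
                    Finset.abs_sum_le_sum_abs _ _
                _ ≤ ∑ j : Fin d, |r.1 j.castSucc| * ((c':ℤ) * n) := by
                    apply Finset.sum_le_sum
                    intro j _
                    rw [abs_mul]
                    exact mul_le_mul_of_nonneg_left (hinit j) (abs_nonneg _)
                _ = _ := by rw [← Finset.sum_mul]
            have h2 : |rVal (projRow r) n (Fin.init v)|
                ≤ |∑ j : Fin d, Fin.init r.1 j * Fin.init v j| + |r.2.1| * n + |r.2.2| := by
              simp only [rVal, projRow]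
              calc |(∑ j : Fin d, Fin.init r.1 j * Fin.init v j) + r.2.1 * n + r.2.2|
                  ≤ |(∑ j : Fin d, Fin.init r.1 j * Fin.init v j) + r.2.1 * n| + |r.2.2| :=
                    abs_add_le _ _
                _ ≤ |∑ j : Fin d, Fin.init r.1 j * Fin.init v j| + |r.2.1 * n| + |r.2.2| := by
                    linarith [abs_add_le (∑ j : Fin d, Fin.init r.1 j * Fin.init v j) (r.2.1 * n)]
                _ = _ := by rw [abs_mul, abs_of_nonneg hn0]
            have h3 : |r.2.2| ≤ |r.2.2| * n := le_mul_of_one_le_right (abs_nonneg _) hn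
            simp only [hM]
            have hexp : ((∑ j : Fin d, |r.1 j.castSucc|) * (c':ℤ) + |r.2.1| + |r.2.2|) * n
                = (∑ j : Fin d, |r.1 j.castSucc|) * ((c':ℤ) * n) + |r.2.1| * n + |r.2.2| * n := by
              ring
            rw [hexp]
            linarith
          have hlow := hv k₀ hk₀L
          rw [rVal_eq_proj] at hlow
          have hup := hv l₀ hl₀L
          rw [rVal_eq_proj] at hup
          have hbk := abs_le.1 (habs k₀ hk₀L)
          have hbl := abs_le.1 (habs l₀ hl₀L)
          have hMk : -(M k₀ * n) ≤ v (Fin.last d) := by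
            rcases le_or_gt 0 (v (Fin.last d)) with h | h
            · have : 0 ≤ M k₀ * n := mul_nonneg (hMnn _) hn0
              linarith
            · have h1 : -(M k₀ * n) ≤ al k₀ * v (Fin.last d) := by linarith [hbk.1, hbk.2]
              have h2 : al k₀ * v (Fin.last d) ≤ v (Fin.last d) := by
                nlinarith [mul_nonneg (by linarith : (0:ℤ) ≤ al k₀ - 1)
                  (by linarith : (0:ℤ) ≤ -v (Fin.last d))]
              linarith
          have hMl : v (Fin.last d) ≤ M l₀ * n := by
            rcases le_or_gt (v (Fin.last d)) 0 with h | h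
            · have : 0 ≤ M l₀ * n := mul_nonneg (hMnn _) hn0
              linarith
            · have h1 : (-(al l₀)) * v (Fin.last d) ≤ M l₀ * n := by linarith [hbl.1, hbl.2]
              have h2 : v (Fin.last d) ≤ (-(al l₀)) * v (Fin.last d) := by
                nlinarith [mul_nonneg (by linarith : (0:ℤ) ≤ -(al l₀) - 1)
                  (by linarith : (0:ℤ) ≤ v (Fin.last d))]
              linarith
          intro j
          refine Fin.lastCases ?_ ?_ j
          · have hc1 : M k₀ ≤ ((c' + ((M k₀).toNat + (M l₀).toNat) : ℕ) : ℤ) := by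
              push_cast
              have := Int.self_le_toNat (M k₀)
              have h2 : (0:ℤ) ≤ ((M l₀).toNat : ℤ) := Int.ofNat_nonneg _
              have h3 : (0:ℤ) ≤ (c' : ℤ) := Int.ofNat_nonneg _
              linarith
            have hc2 : M l₀ ≤ ((c' + ((M k₀).toNat + (M l₀).toNat) : ℕ) : ℤ) := by
              push_cast
              have := Int.self_le_toNat (M l₀)
              have h2 : (0:ℤ) ≤ ((M k₀).toNat : ℤ) := Int.ofNat_nonneg _
              have h3 : (0:ℤ) ≤ (c' : ℤ) := Int.ofNat_nonneg _
              linarith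
            rw [abs_le]
            constructor
            · have := mul_le_mul_of_nonneg_right hc1 hn0
              linarith
            · have := mul_le_mul_of_nonneg_right hc2 hn0
              linarith
          · intro j
            have h1 : |v j.castSucc| ≤ (c':ℤ) * n := hinit j
            have hle : (c' : ℤ) ≤ ((c' + ((M k₀).toNat + (M l₀).toNat):ℕ):ℤ) := by
              push_cast
              have h2 : (0:ℤ) ≤ ((M k₀).toNat : ℤ) := Int.ofNat_nonneg _
              have h3 : (0:ℤ) ≤ ((M l₀).toNat : ℤ) := Int.ofNat_nonneg _
              linarith
            calc |v j.castSucc| ≤ (c':ℤ) * n := h1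
              _ ≤ _ := mul_le_mul_of_nonneg_right hle hn0
      · -- no negative last coefficients: e_last is a recession direction
        push_neg at hneg
        refine Or.inl ⟨fun j => if j = Fin.last d then 1 else 0, ?_, ?_⟩
        · intro h
          have := congrFun h (Fin.last d)
          simp at this
        · intro r hr
          have h1 : rHom r (fun j => if j = Fin.last d then 1 else 0) = al r := by
            simp [rHom, mul_ite, Finset.sum_ite_eq', al]
          rw [h1]; exact hneg r hr
    · -- no positive last coefficients: -e_last is a recession direction
      push_neg at hpos
      refine Or.inl ⟨fun j => if j = Fin.last d then -1 else 0, ?_, ?_⟩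
      · intro h
        have := congrFun h (Fin.last d)
        simp at this
      · intro r hr
        have h1 : rHom r (fun j => if j = Fin.last d then -1 else 0) = -al r := by
          simp [rHom, mul_ite, Finset.sum_ite_eq', al]
        rw [h1]
        simpa using hpos r hr


lemma mbinom_ne_zero {a b : ℤ} : mbinom a b ≠ 0 ↔ (0 ≤ b ∧ b ≤ a) ∨ (a = -1 ∧ b = 0) := by
  unfold mbinom
  split_ifs with h1 h2
  · have hle : b.toNat ≤ a.toNat := Int.toNat_le_toNat h1.2
    simp [(Nat.choose_pos hle).ne', h1]
  · simp [h2]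
  · simp [h1, h2]

lemma rVal_add_smul {d : ℕ} (s : Row d) (n c : ℤ) (v w : Fin d → ℤ) :
    rVal s n (fun j => v j + c * w j) = rVal s n v + c * rHom s w := by
  have h : ∑ j, s.1 j * (v j + c * w j) = (∑ j, s.1 j * v j) + c * ∑ j, s.1 j * w j := by
    rw [Finset.mul_sum, ← Finset.sum_add_distrib]
    exact Finset.sum_congr rfl fun j _ => by ring
  simp only [rVal, rHom, h]
  ring

section glue

variable {r d : ℕ} (A B : Fin r → Fin d → ℤ) (a' a'' b' b'' : Fin r → ℤ)

def rowsOf (ε : Fin r → Bool) (i : Fin r) : List (Row d) :=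
  if ε i then
    [(B i, b' i, b'' i), (fun j => A i j - B i j, a' i - b' i, a'' i - b'' i)]
  else
    [(A i, a' i, a'' i + 1), (fun j => -A i j, -a' i, -a'' i - 1),
     (B i, b' i, b'' i), (fun j => -B i j, -b' i, -b'' i)]

def Lsys (ε : Fin r → Bool) : List (Row d) :=
  (List.finRange r).flatMap (rowsOf A B a' a'' b' b'' ε)

lemma rVal_alpha (i : Fin r) (n : ℤ) (v : Fin d → ℤ) :
    rVal (A i, a' i, a'' i) n v = (∑ j, A i j * v j) + a' i * n + a'' i := rfl

lemma rVal_diff (i : Fin r) (n : ℤ) (v : Fin d → ℤ) :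
    rVal ((fun j => A i j - B i j, a' i - b' i, a'' i - b'' i) : Row d) n v
      = rVal (A i, a' i, a'' i) n v - rVal (B i, b' i, b'' i) n v := by
  simp only [rVal, sub_mul, Finset.sum_sub_distrib]
  ring

lemma rVal_neg1 (i : Fin r) (n : ℤ) (v : Fin d → ℤ) :
    rVal ((fun j => -A i j, -a' i, -a'' i - 1) : Row d) n v
      = -(rVal (A i, a' i, a'' i) n v + 1) := by
  simp only [rVal, neg_mul, Finset.sum_neg_distrib]
  ring

lemma rVal_plus1 (i : Fin r) (n : ℤ) (v : Fin d → ℤ) :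
    rVal ((A i, a' i, a'' i + 1) : Row d) n v = rVal (A i, a' i, a'' i) n v + 1 := by
  simp only [rVal]
  ring

lemma rVal_negB (i : Fin r) (n : ℤ) (v : Fin d → ℤ) :
    rVal ((fun j => -B i j, -b' i, -b'' i) : Row d) n v = -(rVal (B i, b' i, b'' i) n v) := by
  simp only [rVal, neg_mul, Finset.sum_neg_distrib]
  ring

lemma term_of_sat (ε : Fin r → Bool) (n : ℕ) (v : Fin d → ℤ)
    (h : ∀ s ∈ Lsys A B a' a'' b' b'' ε, 0 ≤ rVal s (n : ℤ) v) :
    multisumTerm A B a' a'' b' b'' n v ≠ 0 := by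
  unfold multisumTerm
  rw [Finset.prod_ne_zero_iff]
  intro i _
  have hmem : ∀ s ∈ rowsOf A B a' a'' b' b'' ε i, 0 ≤ rVal s (n : ℤ) v := fun s hs =>
    h s (List.mem_flatMap.2 ⟨i, List.mem_finRange i, hs⟩)
  rw [show ((∑ j, A i j * v j) + a' i * (n:ℤ) + a'' i) = rVal (A i, a' i, a'' i) (n:ℤ) v from rfl,
    show ((∑ j, B i j * v j) + b' i * (n:ℤ) + b'' i) = rVal (B i, b' i, b'' i) (n:ℤ) v from rfl]
  rw [mbinom_ne_zero]
  by_cases hi : ε i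
  · left
    have h1 := hmem (B i, b' i, b'' i) (by rw [rowsOf, if_pos hi]; simp)
    have h2 := hmem ((fun j => A i j - B i j, a' i - b' i, a'' i - b'' i) : Row d)
      (by rw [rowsOf, if_pos hi]; simp)
    rw [rVal_diff] at h2
    exact ⟨h1, by linarith⟩
  · right
    have h1 := hmem ((A i, a' i, a'' i + 1) : Row d) (by rw [rowsOf, if_neg hi]; simp)
    have h2 := hmem ((fun j => -A i j, -a' i, -a'' i - 1) : Row d)
      (by rw [rowsOf, if_neg hi]; simp)
    have h3 := hmem (B i, b' i, b'' i) (by rw [rowsOf, if_neg hi]; simp)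
    have h4 := hmem ((fun j => -B i j, -b' i, -b'' i) : Row d)
      (by rw [rowsOf, if_neg hi]; simp)
    rw [rVal_plus1] at h1
    rw [rVal_neg1] at h2
    rw [rVal_negB] at h4
    exact ⟨by linarith, by linarith⟩

lemma sat_of_term (n : ℕ) (v : Fin d → ℤ) (h : multisumTerm A B a' a'' b' b'' n v ≠ 0) :
    ∃ ε : Fin r → Bool, ∀ s ∈ Lsys A B a' a'' b' b'' ε, 0 ≤ rVal s (n : ℤ) v := by
  unfold multisumTerm at h
  rw [Finset.prod_ne_zero_iff] at h
  have hfac : ∀ i : Fin r,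
      (0 ≤ rVal (B i, b' i, b'' i) (n:ℤ) v ∧
        rVal (B i, b' i, b'' i) (n:ℤ) v ≤ rVal (A i, a' i, a'' i) (n:ℤ) v) ∨
      (rVal (A i, a' i, a'' i) (n:ℤ) v = -1 ∧ rVal (B i, b' i, b'' i) (n:ℤ) v = 0) := by
    intro i
    exact mbinom_ne_zero.1 (h i (Finset.mem_univ i))
  refine ⟨fun i => decide (0 ≤ rVal (B i, b' i, b'' i) (n:ℤ) v ∧
      rVal (B i, b' i, b'' i) (n:ℤ) v ≤ rVal (A i, a' i, a'' i) (n:ℤ) v), ?_⟩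
  intro s hs
  rcases List.mem_flatMap.1 hs with ⟨i, _, hsi⟩
  rw [rowsOf] at hsi
  by_cases hi : 0 ≤ rVal (B i, b' i, b'' i) (n:ℤ) v ∧
      rVal (B i, b' i, b'' i) (n:ℤ) v ≤ rVal (A i, a' i, a'' i) (n:ℤ) v
  · rw [if_pos (by simpa using hi)] at hsi
    simp only [List.mem_cons, List.mem_singleton, List.not_mem_nil, or_false] at hsi
    rcases hsi with rfl | rfl
    · exact hi.1
    · rw [rVal_diff]; linarith [hi.2]
  · have heq := (hfac i).resolve_left hi
    rw [if_neg (by simpa using hi)] at hsi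
    simp only [List.mem_cons, List.mem_singleton, List.not_mem_nil, or_false] at hsi
    rcases hsi with rfl | rfl | rfl | rfl
    · rw [rVal_plus1, heq.1]; norm_num
    · rw [rVal_neg1, heq.1]; norm_num
    · rw [heq.2]
    · rw [rVal_negB, heq.2]; norm_num

end glue

end BMS

/-- **Linear bound on contributing terms of a binomial multisum**: if for every `n` only
finitely many `v ∈ ℤ^d` give a nonzero product, then there is a constant `c` such that
for all `n ≥ 1` every contributing `v` satisfies `|v_j| ≤ c·n` in each coordinate. -/
theorem binomialMultisum_support_linear_bound (r d : ℕ)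
    (A B : Fin r → Fin d → ℤ) (a' a'' b' b'' : Fin r → ℤ)
    (hfin : ∀ n : ℕ, (Function.support (multisumTerm A B a' a'' b' b'' n)).Finite) :
    ∃ c : ℕ, ∀ n : ℕ, 1 ≤ n → ∀ v : Fin d → ℤ,
      multisumTerm A B a' a'' b' b'' n v ≠ 0 → ∀ j : Fin d, |v j| ≤ (c : ℤ) * n := by
  classical
  have key : ∀ ε : Fin r → Bool, ∃ c : ℕ, ∀ n : ℕ, 1 ≤ n → ∀ v : Fin d → ℤ,
      (∀ s ∈ BMS.Lsys A B a' a'' b' b'' ε, 0 ≤ BMS.rVal s (n:ℤ) v) →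
        ∀ j, |v j| ≤ (c:ℤ) * n := by
    intro ε
    rcases BMS.core d (BMS.Lsys A B a' a'' b' b'' ε) with ⟨w, hw0, hw⟩ | ⟨c, hc⟩
    · refine ⟨0, ?_⟩
      intro n hn v hv
      exfalso
      have hmem : ∀ t : ℕ, (fun j => v j + (t:ℤ) * w j) ∈
          Function.support (multisumTerm A B a' a'' b' b'' n) := by
        intro t
        rw [Function.mem_support]
        apply BMS.term_of_sat
        intro s hs
        rw [BMS.rVal_add_smul]
        exact add_nonneg (hv s hs) (mul_nonneg (by positivity) (hw s hs))
      obtain ⟨j, hj⟩ := Function.ne_iff.1 hw0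
      have hinj : Function.Injective (fun t : ℕ => (fun j => v j + (t:ℤ) * w j : Fin d → ℤ)) := by
        intro t1 t2 h12
        have h3 := congrFun h12 j
        simp only at h3
        have h4 : (t1:ℤ) * w j = (t2:ℤ) * w j := by linarith
        have h5 : (t1:ℤ) = (t2:ℤ) := mul_right_cancel₀ hj h4
        exact_mod_cast h5
      exact (Set.infinite_of_injective_forall_mem hinj hmem) (hfin n)
    · exact ⟨c, fun n hn v hv => hc (n:ℤ) (by exact_mod_cast hn) v hv⟩
  choose cf hcf using key
  refine ⟨Finset.univ.sup cf, ?_⟩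
  intro n hn v hterm j
  obtain ⟨ε, hε⟩ := BMS.sat_of_term A B a' a'' b' b'' n v hterm
  have h1 := hcf ε n hn v hε j
  have h2 : (cf ε : ℤ) ≤ ((Finset.univ.sup cf : ℕ) : ℤ) := by
    exact_mod_cast Finset.le_sup (Finset.mem_univ ε)
  calc |v j| ≤ (cf ε : ℤ) * n := h1
    _ ≤ _ := mul_le_mul_of_nonneg_right h2 (by positivity)
end

section
/- Let α₁,…,α_r : ℝ^d → ℝ be affine functions with integer coefficients, and let P = {x ∈ ℝ^d : α_i(x) ≥ 0 for all i = 1,…,r} be the associated (possibly unbounded) polyhedron. If P contains at least one and only finitely many points of the integer lattice ℤ^d, then P is bounded. -/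
open Filter Topology

private lemma strictMono_add_le' {φ : ℕ → ℕ} (h : StrictMono φ) (a N : ℕ) :
    φ a + N ≤ φ (a + N) := by
  induction N with
  | zero => simp
  | succ N ih =>
    have h2 : φ (a + N) < φ (a + N + 1) := h (Nat.lt_succ_self _)
    show φ a + (N + 1) ≤ φ (a + N + 1)
    omega

private lemma exists_direction (r d : ℕ) (A : Fin r → Fin d → ℤ) (b : Fin r → ℤ)
    (P : Set (Fin d → ℝ))
    (hP : P = {x : Fin d → ℝ | ∀ i : Fin r, 0 ≤ (∑ j, (A i j : ℝ) * x j) + (b i : ℝ)})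
    (hub : ¬ Bornology.IsBounded P) :
    ∃ u : Fin d → ℝ, u ≠ 0 ∧ ∀ i, 0 ≤ ∑ j, (A i j : ℝ) * u j := by
  rw [isBounded_iff_forall_norm_le] at hub
  push_neg at hub
  have hx : ∀ n : ℕ, ∃ x ∈ P, (n : ℝ) < ‖x‖ := fun n => hub n
  choose x hxP hxn using hx
  set y : ℕ → (Fin d → ℝ) := fun n => x (n + 1) with hy
  have hyP : ∀ n, y n ∈ P := fun n => hxP (n + 1)
  have hylb : ∀ n : ℕ, (n : ℝ) + 1 < ‖y n‖ := by
    intro n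
    have := hxn (n + 1)
    push_cast at this
    linarith
  have hypos : ∀ n : ℕ, 0 < ‖y n‖ := by
    intro n
    have := hylb n
    have : (0:ℝ) ≤ (n:ℝ) := Nat.cast_nonneg n
    linarith [hylb n]
  set us : ℕ → (Fin d → ℝ) := fun n => ‖y n‖⁻¹ • y n with hus
  have husm : ∀ n, us n ∈ Metric.sphere (0 : Fin d → ℝ) 1 := by
    intro n
    rw [mem_sphere_zero_iff_norm]
    rw [hus]
    simp only [norm_smul, norm_inv, norm_norm]
    exact inv_mul_cancel₀ (hypos n).ne'
  obtain ⟨u, hu_mem, φ, hφ, hconv⟩ :=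
    (isCompact_sphere (0 : Fin d → ℝ) 1).tendsto_subseq husm
  have hu1 : ‖u‖ = 1 := mem_sphere_zero_iff_norm.mp hu_mem
  refine ⟨u, ?_, ?_⟩
  · intro h0; rw [h0, norm_zero] at hu1; norm_num at hu1
  · intro i
    have hLcont : Continuous (fun z : Fin d → ℝ => ∑ j, (A i j : ℝ) * z j) :=
      continuous_finset_sum _ fun j _ => continuous_const.mul (continuous_apply j)
    have htendL : Tendsto (fun k => ∑ j, (A i j : ℝ) * us (φ k) j) atTop
        (𝓝 (∑ j, (A i j : ℝ) * u j)) := (hLcont.tendsto u).comp hconv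
    have hinv0 : Tendsto (fun k : ℕ => ‖y (φ k)‖⁻¹) atTop (𝓝 0) := by
      apply Filter.Tendsto.inv_tendsto_atTop
      apply tendsto_atTop_mono (fun k => (hylb (φ k)).le.trans' ?_)
      · exact tendsto_atTop_add_const_right _ 1
          (tendsto_natCast_atTop_atTop.comp hφ.tendsto_atTop)
      · push_cast
        exact le_refl _
    have hlow : ∀ k : ℕ, ‖y (φ k)‖⁻¹ * (-(b i : ℝ)) ≤ ∑ j, (A i j : ℝ) * us (φ k) j := by
      intro k
      have hmem := (hP ▸ hyP (φ k)) i
      have hc : (0:ℝ) ≤ ‖y (φ k)‖⁻¹ := inv_nonneg.mpr (norm_nonneg _)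
      have hrw : ∑ j, (A i j : ℝ) * us (φ k) j
          = ‖y (φ k)‖⁻¹ * ∑ j, (A i j : ℝ) * y (φ k) j := by
        rw [Finset.mul_sum]
        refine Finset.sum_congr rfl fun j _ => ?_
        simp only [hus, Pi.smul_apply, smul_eq_mul]
        ring
      rw [hrw]
      have : -(b i : ℝ) ≤ ∑ j, (A i j : ℝ) * y (φ k) j := by linarith [hmem]
      exact mul_le_mul_of_nonneg_left this hc
    have h0t : Tendsto (fun k : ℕ => ‖y (φ k)‖⁻¹ * (-(b i : ℝ))) atTop (𝓝 0) := by
      simpa using hinv0.mul_const (-(b i : ℝ))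
    exact le_of_tendsto_of_tendsto' h0t htendL hlow

private lemma exists_int_direction (r d : ℕ) (A : Fin r → Fin d → ℤ)
    (u : Fin d → ℝ) (hu : u ≠ 0) (hAu : ∀ i, 0 ≤ ∑ j, (A i j : ℝ) * u j) :
    ∃ w : Fin d → ℤ, w ≠ 0 ∧ ∀ i, 0 ≤ ∑ j, (A i j : ℝ) * (w j : ℝ) := by
  classical
  set S : ℝ := (∑ i, ∑ j, |(A i j : ℝ)|) + 1 with hSdef
  have hSpos : 0 < S := by
    have : (0:ℝ) ≤ ∑ i, ∑ j, |(A i j : ℝ)| :=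
      Finset.sum_nonneg fun i _ => Finset.sum_nonneg fun j _ => abs_nonneg _
    linarith
  have hrowS : ∀ i, ∑ j, |(A i j : ℝ)| ≤ S := by
    intro i
    have h1 : ∑ j, |(A i j : ℝ)| ≤ ∑ i, ∑ j, |(A i j : ℝ)| :=
      Finset.single_le_sum (f := fun i => ∑ j, |(A i j : ℝ)|)
        (fun i _ => Finset.sum_nonneg fun j _ => abs_nonneg _) (Finset.mem_univ i)
    linarith
  set δ : ℝ := (2 * S)⁻¹ with hδdef
  have hδpos : 0 < δ := by positivity
  have hSδ : S * δ = 1 / 2 := by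
    rw [hδdef]; field_simp
  -- a nonzero coordinate
  obtain ⟨j₀, hj₀⟩ := Function.ne_iff.mp hu
  have hj₀' : 0 < |u j₀| := abs_pos.mpr hj₀
  -- choose N
  have hNi : ∀ i, ∃ Ni : ℕ, 0 < ∑ j, (A i j : ℝ) * u j →
      1 ≤ (Ni : ℝ) * ∑ j, (A i j : ℝ) * u j := by
    intro i
    by_cases hc : 0 < ∑ j, (A i j : ℝ) * u j
    · obtain ⟨Ni, hN⟩ := exists_nat_ge (1 / ∑ j, (A i j : ℝ) * u j)
      exact ⟨Ni, fun _ => by rw [div_le_iff₀ hc] at hN; linarith⟩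
    · exact ⟨0, fun h => absurd h hc⟩
  choose g hg using hNi
  obtain ⟨N', hN'⟩ := exists_nat_gt (δ / |u j₀|)
  have hN'δ : δ < (N' : ℝ) * |u j₀| := by
    rw [div_lt_iff₀ hj₀'] at hN'; linarith
  set N : ℕ := (Finset.univ.sup g) + N' + 1 with hNdef
  have hgN : ∀ i, g i ≤ N := fun i =>
    le_trans (Finset.le_sup (Finset.mem_univ i)) (by omega)
  have hN'N : N' ≤ N := by omega
  -- fractional parts sequence
  set f : ℕ → (Fin d → ℝ) := fun n j => Int.fract ((n : ℝ) * u j) with hfdef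
  have hfmem : ∀ n, f n ∈ Set.pi Set.univ (fun _ : Fin d => Set.Icc (0:ℝ) 1) := by
    intro n j _
    exact ⟨Int.fract_nonneg _, (Int.fract_lt_one _).le⟩
  obtain ⟨p, -, φ, hφ, hconv⟩ :=
    (isCompact_univ_pi fun _ : Fin d => isCompact_Icc).tendsto_subseq hfmem
  obtain ⟨K₀, hK₀⟩ := Metric.tendsto_atTop.mp hconv (δ / 2) (by positivity)
  set n : ℕ := φ K₀ with hn
  set m : ℕ := φ (K₀ + N) with hm
  have hnm : n + N ≤ m := strictMono_add_le' hφ K₀ N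
  set t : ℕ := m - n with ht
  have htN : N ≤ t := by omega
  have htR : (t : ℝ) = (m : ℝ) - (n : ℝ) := by
    push_cast [ht, Nat.cast_sub (by omega : n ≤ m)]; ring
  have hdist : dist (f m) (f n) < δ := by
    have h1 := hK₀ (K₀ + N) (by omega)
    have h2 := hK₀ K₀ (le_refl _)
    calc dist (f m) (f n) ≤ dist (f m) p + dist (f n) p := dist_triangle_right _ _ _
      _ < δ / 2 + δ / 2 := by exact add_lt_add h1 h2
      _ = δ := by ring
  set ε : Fin d → ℝ := fun j => Int.fract ((m : ℝ) * u j) - Int.fract ((n : ℝ) * u j)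
    with hεdef
  have hε : ∀ j, |ε j| < δ := by
    intro j
    have := dist_le_pi_dist (f m) (f n) j
    rw [Real.dist_eq] at this
    calc |ε j| = |f m j - f n j| := rfl
      _ ≤ dist (f m) (f n) := this
      _ < δ := hdist
  set w : Fin d → ℤ := fun j => ⌊(m : ℝ) * u j⌋ - ⌊(n : ℝ) * u j⌋ with hwdef
  have hkey : ∀ j, (t : ℝ) * u j = (w j : ℝ) + ε j := by
    intro j
    have h1 : (⌊(m:ℝ) * u j⌋ : ℝ) + Int.fract ((m:ℝ) * u j) = (m:ℝ) * u j :=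
      Int.floor_add_fract _
    have h2 : (⌊(n:ℝ) * u j⌋ : ℝ) + Int.fract ((n:ℝ) * u j) = (n:ℝ) * u j :=
      Int.floor_add_fract _
    have h3 : ((w j : ℤ) : ℝ) = (⌊(m:ℝ) * u j⌋ : ℝ) - (⌊(n:ℝ) * u j⌋ : ℝ) := by
      rw [hwdef]; push_cast; ring
    rw [htR, h3, hεdef]
    simp only
    linarith
  have hrowε : ∀ i, |∑ j, (A i j : ℝ) * ε j| ≤ 1 / 2 := by
    intro i
    calc |∑ j, (A i j : ℝ) * ε j| ≤ ∑ j, |(A i j : ℝ) * ε j| :=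
          Finset.abs_sum_le_sum_abs _ _
      _ = ∑ j, |(A i j : ℝ)| * |ε j| := by simp [abs_mul]
      _ ≤ ∑ j, |(A i j : ℝ)| * δ := Finset.sum_le_sum fun j _ =>
          mul_le_mul_of_nonneg_left (hε j).le (abs_nonneg _)
      _ = (∑ j, |(A i j : ℝ)|) * δ := by rw [Finset.sum_mul]
      _ ≤ S * δ := mul_le_mul_of_nonneg_right (hrowS i) hδpos.le
      _ = 1 / 2 := hSδ
  have hsum : ∀ i, ∑ j, (A i j : ℝ) * (w j : ℝ)
      = (t : ℝ) * (∑ j, (A i j : ℝ) * u j) - ∑ j, (A i j : ℝ) * ε j := by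
    intro i
    rw [Finset.mul_sum, ← Finset.sum_sub_distrib]
    refine Finset.sum_congr rfl fun j _ => ?_
    have := hkey j
    have hwj : (w j : ℝ) = (t : ℝ) * u j - ε j := by linarith
    rw [hwj]; ring
  refine ⟨w, ?_, ?_⟩
  · intro h0
    have hwj₀ : (w j₀ : ℝ) = 0 := by rw [h0]; simp
    have h1 := hkey j₀
    rw [hwj₀, zero_add] at h1
    have h2 : |(t:ℝ) * u j₀| < δ := by rw [h1]; exact hε j₀
    have h3 : (N' : ℝ) * |u j₀| ≤ (t : ℝ) * |u j₀| := by
      have : (N' : ℝ) ≤ (t : ℝ) := by exact_mod_cast le_trans hN'N htN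
      exact mul_le_mul_of_nonneg_right this (abs_nonneg _)
    rw [abs_mul, abs_of_nonneg (by positivity : (0:ℝ) ≤ (t:ℝ))] at h2
    linarith
  · intro i
    rw [hsum i]
    rcases (hAu i).eq_or_lt with hc | hc
    · -- sum A u = 0
      have hz : ∑ j, (A i j : ℝ) * (w j : ℝ) = - ∑ j, (A i j : ℝ) * ε j := by
        rw [hsum i, ← hc]; ring
      have habs : |∑ j, (A i j : ℝ) * (w j : ℝ)| ≤ 1/2 := by
        rw [hz, abs_neg]; exact hrowε i
      have hcast : ((∑ j, A i j * w j : ℤ) : ℝ) = ∑ j, (A i j : ℝ) * (w j : ℝ) := by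
        push_cast; ring
      have hint : |∑ j, A i j * w j| < 1 := by
        have : |((∑ j, A i j * w j : ℤ) : ℝ)| < 1 := by rw [hcast]; linarith [habs]
        exact_mod_cast this
      have hz0 : (∑ j, A i j * w j : ℤ) = 0 := by
        have := abs_lt.mp hint; omega
      have hr0 : ∑ j, (A i j : ℝ) * (w j : ℝ) = 0 := by rw [← hcast, hz0]; simp
      rw [hsum i] at hr0
      linarith
    · have h1 : 1 ≤ (g i : ℝ) * ∑ j, (A i j : ℝ) * u j := hg i hc
      have h2 : (g i : ℝ) ≤ (t : ℝ) := by exact_mod_cast le_trans (hgN i) htN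
      have h3 : (g i : ℝ) * (∑ j, (A i j : ℝ) * u j) ≤
          (t : ℝ) * (∑ j, (A i j : ℝ) * u j) := by
        exact mul_le_mul_of_nonneg_right h2 hc.le
      linarith [hrowε i, le_abs_self (∑ j, (A i j : ℝ) * ε j)]

/-- **Geometric lemma**: a polyhedron `P ⊆ ℝ^d` cut out by finitely many
integer-coefficient affine inequalities that contains at least one and only finitely
many integer lattice points is bounded. -/
theorem polyhedron_finite_lattice_points_bounded (r d : ℕ)
    (A : Fin r → Fin d → ℤ) (b : Fin r → ℤ) (P : Set (Fin d → ℝ))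
    (hP : P = {x : Fin d → ℝ | ∀ i : Fin r, 0 ≤ (∑ j, (A i j : ℝ) * x j) + (b i : ℝ)})
    (hne : ∃ v : Fin d → ℤ, (fun j => (v j : ℝ)) ∈ P)
    (hfin : {v : Fin d → ℤ | (fun j => (v j : ℝ)) ∈ P}.Finite) :
    Bornology.IsBounded P := by
  by_contra hub
  obtain ⟨u, hu0, hAu⟩ := exists_direction r d A b P hP hub
  obtain ⟨w, hw0, hAw⟩ := exists_int_direction r d A u hu0 hAu
  obtain ⟨v, hv⟩ := hne
  obtain ⟨j₀, hj₀⟩ := Function.ne_iff.mp hw0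
  have hj₀' : w j₀ ≠ 0 := by simpa using hj₀
  rw [hP] at hv
  have hmem : ∀ k : ℕ,
      (fun j => v j + (k : ℤ) * w j) ∈ {v : Fin d → ℤ | (fun j => (v j : ℝ)) ∈ P} := by
    intro k
    rw [Set.mem_setOf_eq, hP, Set.mem_setOf_eq]
    intro i
    have h1 := hv i
    have h2 := hAw i
    have hsplit : ∑ j, (A i j : ℝ) * ((v j + (k : ℤ) * w j : ℤ) : ℝ)
        = ∑ j, (A i j : ℝ) * (v j : ℝ) + (k : ℝ) * ∑ j, (A i j : ℝ) * (w j : ℝ) := by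
      rw [Finset.mul_sum, ← Finset.sum_add_distrib]
      refine Finset.sum_congr rfl fun j _ => ?_
      push_cast; ring
    simp only [hsplit]
    have h3 : (0:ℝ) ≤ (k : ℝ) * ∑ j, (A i j : ℝ) * (w j : ℝ) :=
      mul_nonneg (by positivity) h2
    simp only [Set.mem_setOf_eq] at h1
    linarith
  have hinj : Function.Injective (fun k : ℕ => (fun j => v j + (k : ℤ) * w j)) := by
    intro k k' h
    have h0 := congrFun h j₀
    simp only at h0
    have : (k : ℤ) * w j₀ = (k' : ℤ) * w j₀ := by linarith [h0]
    have := mul_right_cancel₀ hj₀' this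
    exact_mod_cast this
  exact hfin.not_infinite (Set.infinite_of_injective_forall_mem hinj hmem)
end
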